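/- Let (H,∘) be a hypergroup and ρ a strongly regular equivalence relation on H (so that H/ρ is a group). Then for every x ∈ H, the equivalence class ρ(x) equals x ∘ S_ρ, where S_ρ = {h ∈ H : ρ(h) is the identity of the group H/ρ}. -/

import Mathlib

open Set

/-- A hypergroup: a nonempty-set-valued binary hyperoperation that is associative
and reproductive. -/
structure Hypergroup (H : Type) where
  hmul : H → H → Set H
  nonempty : ∀ a b, (hmul a b).Nonempty
  assoc : ∀ a b c, (⋃ x ∈ hmul a b, hmul x c) = ⋃ y ∈ hmul b c, hmul a y
  reproL : ∀ a, (⋃ x, hmul a x) = Set.univ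
  reproR : ∀ a, (⋃ x, hmul x a) = Set.univ

namespace Hypergroup

variable {H : Type}

/-- Product of two subsets. -/
def smul (hg : Hypergroup H) (A B : Set H) : Set H := ⋃ a ∈ A, ⋃ b ∈ B, hg.hmul a b

/-- Hyperproduct of an element with a list of further factors. -/
def hprod (hg : Hypergroup H) : H → List H → Set H
  | a, [] => {a}
  | a, b :: l => ⋃ x ∈ hg.hmul a b, hg.hprod x l

/-- Hyperproduct of a (nonempty) list of factors. -/
def sprod (hg : Hypergroup H) : List H → Set H
  | [] => ∅
  | a :: l => hg.hprod a l

/-- The relation β : being together in some finite hyperproduct. -/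
def beta (hg : Hypergroup H) (a b : H) : Prop := ∃ l, a ∈ hg.sprod l ∧ b ∈ hg.sprod l

/-- β*, the transitive (equivalence) closure of β. -/
def betaStar (hg : Hypergroup H) : H → H → Prop := Relation.EqvGen hg.beta

/-- The relation γ : lying in hyperproducts of permuted factor lists. -/
def gamma (hg : Hypergroup H) (a b : H) : Prop :=
  ∃ l l' : List H, l.Perm l' ∧ a ∈ hg.sprod l ∧ b ∈ hg.sprod l'

/-- γ*, the transitive (equivalence) closure of γ. -/
def gammaStar (hg : Hypergroup H) : H → H → Prop := Relation.EqvGen hg.gamma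

/-- A strongly regular equivalence relation. -/
def StronglyRegular (hg : Hypergroup H) (r : H → H → Prop) : Prop :=
  Equivalence r ∧
  ∀ a b x, r a b →
    (∀ u ∈ hg.hmul a x, ∀ v ∈ hg.hmul b x, r u v) ∧
    (∀ u ∈ hg.hmul x a, ∀ v ∈ hg.hmul x b, r u v)

/-- A regular equivalence relation. -/
def Regular (hg : Hypergroup H) (r : H → H → Prop) : Prop :=
  Equivalence r ∧
  ∀ a b x, r a b →
    ((∀ u ∈ hg.hmul a x, ∃ v ∈ hg.hmul b x, r u v) ∧
     (∀ v ∈ hg.hmul b x, ∃ u ∈ hg.hmul a x, r u v)) ∧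
    ((∀ u ∈ hg.hmul x a, ∃ v ∈ hg.hmul x b, r u v) ∧
     (∀ v ∈ hg.hmul x b, ∃ u ∈ hg.hmul x a, r u v))

/-- A subhypergroup: nonempty, closed under the hyperoperation, reproductive inside. -/
def IsSubhypergroup (hg : Hypergroup H) (K : Set H) : Prop :=
  K.Nonempty ∧ (∀ a ∈ K, ∀ b ∈ K, hg.hmul a b ⊆ K) ∧
  (∀ a ∈ K, K ⊆ hg.smul {a} K) ∧ (∀ a ∈ K, K ⊆ hg.smul K {a})

/-- A closed subhypergroup: solutions of `b ∈ a∘x`, `b ∈ x∘a` with `a,b ∈ K` lie in `K`. -/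
def IsClosed (hg : Hypergroup H) (K : Set H) : Prop :=
  ∀ a ∈ K, ∀ b ∈ K, ∀ x, (b ∈ hg.hmul a x → x ∈ K) ∧ (b ∈ hg.hmul x a → x ∈ K)

/-- A complete part: if a finite hyperproduct meets it, it contains it. -/
def IsCompletePart (hg : Hypergroup H) (C : Set H) : Prop :=
  ∀ l : List H, l ≠ [] → (hg.sprod l ∩ C).Nonempty → hg.sprod l ⊆ C

/-- The β-heart `S_β` : elements whose β*-class acts as identity. -/
def heartBeta (hg : Hypergroup H) : Set H :=
  {h | ∀ x, ∀ z ∈ hg.hmul x h, hg.betaStar z x}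

/-- The γ-heart `S_γ` (the derived subhypergroup `H'`). -/
def heartGamma (hg : Hypergroup H) : Set H :=
  {h | ∀ x, ∀ z ∈ hg.hmul x h, hg.gammaStar z x}

/-- The coset `x ∘ K`. -/
def coset (hg : Hypergroup H) (K : Set H) (x : H) : Set H := hg.smul {x} K

/-- Normal subhypergroup: `x ∘ K = K ∘ x` for all `x`. -/
def IsNormal (hg : Hypergroup H) (K : Set H) : Prop :=
  ∀ x, hg.smul {x} K = hg.smul K {x}

/-- `φ : H → G` realizes the quotient group of `H` modulo the relation `r`. -/
def IsQuotientGroupMap (hg : Hypergroup H) (r : H → H → Prop) {G : Type} [Group G]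
    (φ : H → G) : Prop :=
  Function.Surjective φ ∧ (∀ a b, φ a = φ b ↔ r a b) ∧
  ∀ a b, ∀ z ∈ hg.hmul a b, φ z = φ a * φ b

/-- The set of identities of a hypergroup. -/
def Ident (hg : Hypergroup H) : Set H :=
  {e | ∀ x, x ∈ hg.hmul e x ∧ x ∈ hg.hmul x e}

/-- `C_H(x)`. -/
def Cset (hg : Hypergroup H) (x : H) : Set H :=
  {y | (hg.Ident ∩ (hg.hmul y x ∩ hg.hmul x y)).Nonempty}

/-- A strongly regular hypergroup: identities exist and each `C_H(x)` is a singleton. -/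
def IsStronglyRegularHypergroup (hg : Hypergroup H) : Prop :=
  hg.Ident.Nonempty ∧ ∀ x, ∃ y, hg.Cset x = {y}

end Hypergroup

/-- A canonical hypergroup. -/
structure CanonicalHypergroup (H : Type) extends Hypergroup H where
  comm : ∀ a b, hmul a b = hmul b a
  zero : H
  zero_hmul : ∀ x, hmul zero x = {x}
  inv : H → H
  inv_spec : ∀ x, zero ∈ hmul x (inv x)
  inv_unique : ∀ x y, zero ∈ hmul x y → y = inv x
  reversible : ∀ x y z, x ∈ hmul y z → y ∈ hmul x (inv z)

/-- `π : H → Q` realizes the quotient hypergroup `H/K`. -/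
def IsQuotientHypergroupMap {H Q : Type} (hg : Hypergroup H) (K : Set H)
    (hq : Hypergroup Q) (π : H → Q) : Prop :=
  Function.Surjective π ∧ (∀ x y, π x = π y ↔ hg.coset K x = hg.coset K y) ∧
  ∀ x y, hq.hmul (π x) (π y) = π '' hg.hmul x y

open Hypergroup in
/-- for a strongly regular relation ρ on a hypergroup H,
ρ(x) = x ∘ S_ρ, where S_ρ is the preimage of the identity of H/ρ. -/
theorem stmt0 {H : Type} (hg : Hypergroup H) (r : H → H → Prop)
    (hsr : hg.StronglyRegular r) {G : Type} [Group G] (φ : H → G)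
    (hφ : hg.IsQuotientGroupMap r φ) (x : H) :
    {y | r x y} = ⋃ h ∈ {h : H | φ h = 1}, hg.hmul x h := by
  obtain ⟨-, hiff, hmul⟩ := hφ
  ext y
  simp only [Set.mem_setOf_eq, Set.mem_iUnion]
  constructor
  · intro hxy
    have hy : y ∈ ⋃ h, hg.hmul x h := by rw [hg.reproL x]; trivial
    obtain ⟨h, hyh⟩ := Set.mem_iUnion.mp hy
    refine ⟨h, ?_, hyh⟩
    have := hmul x h y hyh
    have hxy' : φ x = φ y := (hiff x y).mpr hxy
    rw [← hxy'] at this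
    exact mul_eq_left.mp this.symm
  · rintro ⟨h, hh, hyh⟩
    have := hmul x h y hyh
    rw [hh, mul_one] at this
    exact (hiff x y).mp this.symm
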